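/- Leading small-t behaviour of the discrete form factor sum for p = 1: with kernel K(i,j) defined via Gauss hypergeometric functions as K(i,i) = lim_{j→i} of [((-1/2)_{i+1}(1/2)_{j+1}/(i!j!)) t^{(i+j)/2+1} (1/(i-j)) ( (1/(j+1)) ₂F₁(1/2,i+3/2;i+1;t) ₂F₁(1/2,j+1/2;j+2;t) - (1/(i+1)) ₂F₁(1/2,j+3/2;j+1;t) ₂F₁(1/2,i+1/2;i+2;t) )], one has K(i,i) ~ [(1/2)_{i+1}(-1/2)_{i+1}/((i+1)!)²] t^{i+1} as t → 0⁺; consequently Σ_{n₁ ≥ n} K(n₁,n₁) ~ [(1/2)_{n+1}(-1/2)_{n+1}/((n+1)!)²] t^{n+1} as t → 0⁺ for each fixed n ≥ 0. -/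

import Mathlib

open Real Filter Topology

/-- The Gauss hypergeometric function `₂F₁(a,b;c;t)` as a power series. -/
noncomputable def gaussHyp (a b c t : ℝ) : ℝ :=
  ∑' n : ℕ, ((ascPochhammer ℝ n).eval a * (ascPochhammer ℝ n).eval b /
    (ascPochhammer ℝ n).eval c) * t ^ n / (n.factorial : ℝ)

/-- The kernel expression `K(i,j)` (for integer `i` and real `j`, so that the diagonal
value can be taken as a limit `j → i`):
`K(i,j) = ((-1/2)_{i+1}(1/2)_{j+1}/(i! j!)) t^{(i+j)/2+1} (1/(i-j)) × [⋯]`,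
where `(1/2)_{j+1} = Γ(j+3/2)/Γ(1/2)` and `j! = Γ(j+1)`. -/
noncomputable def kernelExpr (i : ℕ) (j t : ℝ) : ℝ :=
  ((ascPochhammer ℝ (i + 1)).eval (-(1/2)) * (Real.Gamma (j + 3/2) / Real.Gamma (1/2)) /
      ((i.factorial : ℝ) * Real.Gamma (j + 1))) *
    t ^ (((i : ℝ) + j) / 2 + 1) * (1 / ((i : ℝ) - j)) *
    ((1 / (j + 1)) * gaussHyp (1/2) ((i : ℝ) + 3/2) ((i : ℝ) + 1) t *
        gaussHyp (1/2) (j + 1/2) (j + 2) t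
      - (1 / ((i : ℝ) + 1)) * gaussHyp (1/2) (j + 3/2) (j + 1) t *
        gaussHyp (1/2) ((i : ℝ) + 1/2) ((i : ℝ) + 2) t)

set_option maxHeartbeats 1600000

noncomputable def P (n : ℕ) (x : ℝ) : ℝ := (ascPochhammer ℝ n).eval x

lemma P_zero (x : ℝ) : P 0 x = 1 := by simp [P]

lemma P_succ (n : ℕ) (x : ℝ) : P (n+1) x = P n x * (x + n) := by
  simp [P, ascPochhammer_succ_right]

lemma P_pos {n : ℕ} {x : ℝ} (hx : 0 < x) : 0 < P n x := by
  induction n with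
  | zero => simp [P_zero]
  | succ n ih => rw [P_succ]; positivity

lemma P_mono {n : ℕ} {x y : ℝ} (hx : 0 < x) (hxy : x ≤ y) : P n x ≤ P n y := by
  induction n with
  | zero => simp [P_zero]
  | succ n ih =>
    rw [P_succ, P_succ]
    have h1 : 0 < P n x := P_pos hx
    have := P_pos (lt_of_lt_of_le hx hxy) (n := n)
    nlinarith [Nat.cast_nonneg (α := ℝ) n]

lemma P_lip {n : ℕ} {x y : ℝ} (hx : (1:ℝ)/4 ≤ x) (hxy : x ≤ y) :
    P n y - P n x ≤ (y - x) * (4 * n) * P n y := by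
  induction n with
  | zero => simp [P_zero]
  | succ n ih =>
    have hy : (1:ℝ)/4 ≤ y := le_trans hx hxy
    have hxp : 0 < x := by linarith
    have hyp : 0 < y := by linarith
    have hpx : 0 < P n x := P_pos hxp
    have hpy : 0 < P n y := P_pos hyp
    have hyn : (1:ℝ)/4 ≤ y + n := by
      have := Nat.cast_nonneg (α := ℝ) n; linarith
    have hPy : P n y ≤ 4 * P (n+1) y := by
      rw [P_succ]; nlinarith
    have hxn : 0 < x + (n:ℝ) := by have := Nat.cast_nonneg (α := ℝ) n; linarith
    rw [P_succ, P_succ]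
    have key : P n y * (y + n) - P n x * (x + n)
        = (P n y - P n x) * (y + n) + P n x * (y - x) := by ring
    rw [key]
    have h1 : (P n y - P n x) * (y + n) ≤ (y - x) * (4*n) * P n y * (y + n) := by
      have := mul_le_mul_of_nonneg_right ih (le_of_lt (by linarith : (0:ℝ) < y + n))
      linarith
    have h2 : P n x * (y - x) ≤ P n y * (y - x) := by
      have := P_mono hxp hxy (n := n)
      nlinarith
    have h3 : P n y * (y - x) ≤ (y - x) * 4 * P (n+1) y := by nlinarith
    have h4 : (y - x) * (4*n) * P n y * (y + n) = (y - x) * (4*n) * P (n+1) y := by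
      rw [P_succ]; ring
    rw [P_succ] at *
    push_cast
    nlinarith

lemma nat_add_one_le_two_pow (n : ℕ) : (n:ℝ) + 1 ≤ 2 ^ n := by
  have h : n + 1 ≤ 2 ^ n := Nat.lt_two_pow_self
  exact_mod_cast Nat.cast_le.mpr h

lemma P_shift (n : ℕ) (x : ℝ) : x * P n (x+1) = P n x * (x + n) := by
  induction n with
  | zero => simp [P_zero]
  | succ n ih =>
    rw [P_succ, P_succ]
    push_cast
    linear_combination ih * (x + 1 + (n:ℝ))

lemma P_shift_le {n : ℕ} {x y : ℝ} (hx : (3:ℝ)/4 ≤ x) (hy : 0 < y) (hyx : y ≤ x + 1) :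
    P n y ≤ 2 * 2 ^ n * P n x := by
  have hxp : (0:ℝ) < x := by linarith
  have h1 : P n y ≤ P n (x+1) := P_mono hy hyx
  have h2 : P n (x+1) = P n x * (x + n) / x := by
    field_simp
    nlinarith [P_shift n x]
  have hp : 0 < P n x := P_pos hxp
  have hn : (n:ℝ) + 1 ≤ 2^n := nat_add_one_le_two_pow n
  have h3 : P n x * (x + n) / x ≤ 2 * 2^n * P n x := by
    rw [div_le_iff₀ hxp]
    have hn0 : (0:ℝ) ≤ (n:ℝ) := Nat.cast_nonneg n
    have h2n : (0:ℝ) < 2^n := by positivity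
    have hfac : x + (n:ℝ) ≤ 2 * 2^n * x := by nlinarith
    nlinarith
  linarith [h1, h2 ▸ h1]

lemma P_half_le_factorial (n : ℕ) : P n (1/2) ≤ n.factorial := by
  induction n with
  | zero => simp [P_zero]
  | succ n ih =>
    rw [P_succ]
    have h1 : (0:ℝ) < P n (1/2) := P_pos (by norm_num)
    have : ((n+1).factorial : ℝ) = (n.factorial : ℝ) * (n+1) := by
      push_cast [Nat.factorial_succ]; ring
    rw [this]
    nlinarith [Nat.cast_nonneg (α := ℝ) n]

noncomputable def gterm (b c t : ℝ) (n : ℕ) : ℝ :=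
  (P n (1/2) * P n b / P n c) * t ^ n / (n.factorial : ℝ)

lemma gaussHyp_eq (b c t : ℝ) : gaussHyp (1/2) b c t = ∑' n, gterm b c t n := rfl

lemma gterm_zero (b c t : ℝ) : gterm b c t 0 = 1 := by simp [gterm, P_zero]

lemma gterm_nonneg {b c t : ℝ} (hb : 0 < b) (hc : 0 < c) (ht : 0 ≤ t) (n : ℕ) :
    0 ≤ gterm b c t n := by
  have h1 := P_pos (n := n) (by norm_num : (0:ℝ) < 1/2)
  have h2 := P_pos (n := n) hb
  have h3 := P_pos (n := n) hc
  have : (0:ℝ) < n.factorial := by exact_mod_cast Nat.factorial_pos n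
  unfold gterm
  positivity

lemma gterm_le_typeA {b c t : ℝ} (hb : 0 < b) (hbc : b ≤ c) (ht : 0 ≤ t) (n : ℕ) :
    gterm b c t n ≤ t ^ n := by
  have h1 := P_pos (n := n) (by norm_num : (0:ℝ) < 1/2)
  have h2 := P_pos (n := n) hb
  have h3 := P_pos (n := n) (lt_of_lt_of_le hb hbc)
  have hf : (0:ℝ) < n.factorial := by exact_mod_cast Nat.factorial_pos n
  have hbc' : P n b ≤ P n c := P_mono hb hbc
  have hhalf : P n (1/2) ≤ n.factorial := P_half_le_factorial n
  have htn : (0:ℝ) ≤ t ^ n := pow_nonneg ht n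
  unfold gterm
  rw [div_le_iff₀ hf]
  calc P n (1/2) * P n b / P n c * t ^ n ≤ 1 * n.factorial * t^n := by
        apply mul_le_mul_of_nonneg_right _ htn
        rw [div_le_iff₀ h3]
        nlinarith
    _ = t ^ n * n.factorial := by ring

lemma gterm_le_typeB {b c t : ℝ} (hb : 0 < b) (hc : (3:ℝ)/4 ≤ c) (hbc : b ≤ c + 1)
    (ht : 0 ≤ t) (n : ℕ) : gterm b c t n ≤ 2 * (2*t) ^ n := by
  have h1 := P_pos (n := n) (by norm_num : (0:ℝ) < 1/2)
  have h2 := P_pos (n := n) hb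
  have h3 := P_pos (n := n) (by linarith : (0:ℝ) < c)
  have hf : (0:ℝ) < n.factorial := by exact_mod_cast Nat.factorial_pos n
  have hbc' : P n b ≤ 2 * 2^n * P n c := P_shift_le hc hb hbc
  have hhalf : P n (1/2) ≤ n.factorial := P_half_le_factorial n
  have htn : (0:ℝ) ≤ t ^ n := pow_nonneg ht n
  unfold gterm
  rw [div_le_iff₀ hf]
  have : (2*t)^n = 2^n * t^n := mul_pow 2 t n
  rw [this]
  calc P n (1/2) * P n b / P n c * t ^ n ≤ (n.factorial : ℝ) * (2 * 2^n) * t^n := by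
        apply mul_le_mul_of_nonneg_right _ htn
        rw [div_le_iff₀ h3]
        nlinarith
    _ = 2 * (2^n * t^n) * n.factorial := by ring

lemma gterm_summable_typeA {b c t : ℝ} (hb : 0 < b) (hbc : b ≤ c) (ht : 0 ≤ t) (ht1 : t < 1) :
    Summable (gterm b c t) :=
  Summable.of_nonneg_of_le (gterm_nonneg hb (lt_of_lt_of_le hb hbc) ht)
    (gterm_le_typeA hb hbc ht) (summable_geometric_of_lt_one ht ht1)

lemma gterm_summable_typeB {b c t : ℝ} (hb : 0 < b) (hc : (3:ℝ)/4 ≤ c) (hbc : b ≤ c + 1)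
    (ht : 0 ≤ t) (ht1 : 2*t < 1) : Summable (gterm b c t) :=
  Summable.of_nonneg_of_le (gterm_nonneg hb (by linarith) ht)
    (gterm_le_typeB hb hc hbc ht)
    ((summable_geometric_of_lt_one (by linarith) ht1).mul_left 2)

lemma tail_sum_le {f : ℕ → ℝ} {K r : ℝ} (hf : Summable f) (h0 : ∀ n, 0 ≤ f n)
    (hle : ∀ n, f n ≤ K * r ^ n) (hr : 0 ≤ r) (hr1 : r < 1) :
    0 ≤ ∑' n, f (n+1) ∧ ∑' n, f (n+1) ≤ K * r * (1-r)⁻¹ := by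
  have hs : Summable (fun n => f (n+1)) := (summable_nat_add_iff 1).mpr hf
  have hg : Summable (fun n : ℕ => r ^ n) := summable_geometric_of_lt_one hr hr1
  have hg' : Summable (fun n : ℕ => K * r ^ n * r) := (hg.mul_left K).mul_right r
  constructor
  · exact tsum_nonneg (fun n => h0 _)
  · have h1 : ∑' n, f (n+1) ≤ ∑' n : ℕ, K * r ^ n * r := by
      apply Summable.tsum_le_tsum _ hs hg'
      intro n
      calc f (n+1) ≤ K * r ^ (n+1) := hle (n+1)
        _ = K * r ^ n * r := by ring
    have h2 : ∑' n : ℕ, K * r ^ n * r = K * (1-r)⁻¹ * r := by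
      rw [tsum_mul_right, tsum_mul_left, tsum_geometric_of_lt_one hr hr1]
    rw [h2] at h1
    linarith [h1]

lemma gauss_bound_typeA {b c t : ℝ} (hb : 0 < b) (hbc : b ≤ c) (ht : 0 < t) (ht16 : t ≤ 1/16) :
    1 ≤ gaussHyp (1/2) b c t ∧ gaussHyp (1/2) b c t ≤ 1 + 2*t := by
  have ht1 : t < 1 := by linarith
  have hs := gterm_summable_typeA hb hbc ht.le ht1
  rw [gaussHyp_eq, Summable.tsum_eq_zero_add hs, gterm_zero]
  have := tail_sum_le hs (gterm_nonneg hb (lt_of_lt_of_le hb hbc) ht.le)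
    (fun n => by rw [one_mul]; exact gterm_le_typeA hb hbc ht.le n) ht.le ht1
  have hinv : (1 - t)⁻¹ ≤ 2 := by
    rw [inv_le_comm₀ (by linarith) (by norm_num)]; linarith
  have h2 : 1 * t * (1-t)⁻¹ ≤ 2 * t := by
    have h0 : (0:ℝ) < 1 - t := by linarith
    have : (0:ℝ) < (1-t)⁻¹ := by positivity
    nlinarith
  constructor
  · linarith [this.1]
  · have := this.2; simp only [one_mul] at this ⊢; linarith

lemma gauss_bound_typeB {b c t : ℝ} (hb : 0 < b) (hc : (3:ℝ)/4 ≤ c) (hbc : b ≤ c + 1)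
    (ht : 0 < t) (ht16 : t ≤ 1/16) :
    1 ≤ gaussHyp (1/2) b c t ∧ gaussHyp (1/2) b c t ≤ 1 + 5*t := by
  have ht1 : 2*t < 1 := by linarith
  have hs := gterm_summable_typeB hb hc hbc ht.le ht1
  rw [gaussHyp_eq, Summable.tsum_eq_zero_add hs, gterm_zero]
  have hb2 : ∀ n, gterm b c t n ≤ 2 * (2*t)^n := gterm_le_typeB hb hc hbc ht.le
  have := tail_sum_le hs (gterm_nonneg hb (by linarith) ht.le) hb2 (by linarith) ht1
  have hinv : (1 - 2*t)⁻¹ ≤ 8/7 := by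
    rw [inv_le_comm₀ (by linarith) (by norm_num)]; linarith
  constructor
  · linarith [this.1]
  · have h := this.2
    have hp0 : (0:ℝ) < 1-2*t := by linarith
    have hp : (0:ℝ) < (1-2*t)⁻¹ := by positivity
    nlinarith

lemma P_lip' {n : ℕ} {x y z : ℝ} (hx : (1:ℝ)/4 ≤ x) (hy : (1:ℝ)/4 ≤ y)
    (hxz : x ≤ z) (hyz : y ≤ z) :
    |P n x - P n y| ≤ |x - y| * (4*n) * P n z := by
  rcases le_total x y with h | h
  · rw [abs_of_nonpos (by linarith [P_mono (by linarith : (0:ℝ) < x) h (n := n)] : P n x - P n y ≤ 0),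
      abs_of_nonpos (by linarith : x - y ≤ 0)]
    have h1 := P_lip (n := n) hx h
    have h2 : P n y ≤ P n z := P_mono (by linarith) hyz
    have h3 := mul_le_mul_of_nonneg_left h2 (mul_nonneg (by linarith : (0:ℝ) ≤ y-x) (by positivity : (0:ℝ) ≤ (4:ℝ)*n))
    nlinarith
  · rw [abs_of_nonneg (by linarith [P_mono (by linarith : (0:ℝ) < y) h (n := n)] : 0 ≤ P n x - P n y),
      abs_of_nonneg (by linarith : 0 ≤ x - y)]
    have h1 := P_lip (n := n) hy h
    have h2 : P n x ≤ P n z := P_mono (by linarith) hxz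
    have h3 := mul_le_mul_of_nonneg_left h2 (mul_nonneg (by linarith : (0:ℝ) ≤ x-y) (by positivity : (0:ℝ) ≤ (4:ℝ)*n))
    nlinarith

lemma div_sub_div_abs_le {u1 u2 v1 v2 : ℝ} (hu2 : 0 ≤ u2) (hv1 : 0 < v1) (hv2 : 0 < v2) :
    |u1/v1 - u2/v2| ≤ (|u1 - u2| + (u2/v2) * |v1 - v2|) / v1 := by
  have key : u1/v1 - u2/v2 = ((u1 - u2) + (u2/v2)*(v2 - v1))/v1 := by
    field_simp
    ring
  rw [key, abs_div, abs_of_pos hv1]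
  gcongr
  calc |(u1-u2) + (u2/v2)*(v2-v1)| ≤ |u1-u2| + |(u2/v2)*(v2-v1)| := abs_add_le _ _
    _ = |u1-u2| + (u2/v2)*|v1-v2| := by
        rw [abs_mul, abs_of_nonneg (div_nonneg hu2 hv2.le), abs_sub_comm v2 v1]

lemma ratio_lip (i : ℕ) {β γ x y : ℝ} (hβ : 1/2 ≤ β) (hγ : 1 ≤ γ) (hβγ : β ≤ γ + 1/2)
    (hx : |x - (i:ℝ)| ≤ 1/4) (hy : |y - (i:ℝ)| ≤ 1/4) (n : ℕ) :
    |P n (x+β)/P n (x+γ) - P n (y+β)/P n (y+γ)| ≤ 24 * 8^n * |x - y| := by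
  have hI : (0:ℝ) ≤ (i:ℝ) := Nat.cast_nonneg i
  have hx1 : (i:ℝ) - 1/4 ≤ x := by cases abs_le.mp hx; linarith
  have hx2 : x ≤ (i:ℝ) + 1/4 := by cases abs_le.mp hx; linarith
  have hy1 : (i:ℝ) - 1/4 ≤ y := by cases abs_le.mp hy; linarith
  have hy2 : y ≤ (i:ℝ) + 1/4 := by cases abs_le.mp hy; linarith
  obtain ⟨Zb, hZb⟩ : ∃ z : ℝ, z = (i:ℝ) + β + 1/4 := ⟨_, rfl⟩
  obtain ⟨mg, hmg⟩ : ∃ z : ℝ, z = (i:ℝ) + γ - 1/4 := ⟨_, rfl⟩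
  obtain ⟨Zg, hZg⟩ : ∃ z : ℝ, z = (i:ℝ) + γ + 1/4 := ⟨_, rfl⟩
  have hmg34 : (3:ℝ)/4 ≤ mg := by rw [hmg]; linarith
  have hu1p : 0 < P n (x+β) := P_pos (by linarith)
  have hu2p : 0 < P n (y+β) := P_pos (by linarith)
  have hv1p : 0 < P n (x+γ) := P_pos (by linarith)
  have hv2p : 0 < P n (y+γ) := P_pos (by linarith)
  have hmp : 0 < P n mg := P_pos (by linarith)
  have h2n : (0:ℝ) < 2^n := by positivity
  have h1q : (1:ℝ) ≤ 2^n := one_le_pow₀ (by norm_num)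
  have hnle : (n:ℝ) ≤ 2^n := by have := nat_add_one_le_two_pow n; linarith
  have habs : (0:ℝ) ≤ |x - y| := abs_nonneg _
  have hu : |P n (x+β) - P n (y+β)| ≤ |x-y| * (4*n) * P n Zb := by
    have h := P_lip' (n := n) (x := x+β) (y := y+β) (z := Zb)
      (by linarith) (by linarith) (by rw [hZb]; linarith) (by rw [hZb]; linarith)
    have hxy : x + β - (y + β) = x - y := by ring
    rwa [hxy] at h
  have hZble : P n Zb ≤ 2 * 2^n * P n mg :=
    P_shift_le hmg34 (by rw [hZb]; linarith) (by rw [hZb, hmg]; linarith)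
  have hv1ge : P n mg ≤ P n (x+γ) := P_mono (by linarith) (by rw [hmg]; linarith)
  have hv : |P n (x+γ) - P n (y+γ)| ≤ |x-y| * (4*n) * P n Zg := by
    have h := P_lip' (n := n) (x := x+γ) (y := y+γ) (z := Zg)
      (by linarith) (by linarith) (by rw [hZg]; linarith) (by rw [hZg]; linarith)
    have hxy : x + γ - (y + γ) = x - y := by ring
    rwa [hxy] at h
  have hZgle : P n Zg ≤ 2 * 2^n * P n mg :=
    P_shift_le hmg34 (by rw [hZg]; linarith) (by rw [hZg, hmg]; linarith)
  have huv2 : P n (y+β) ≤ 2 * 2^n * P n (y+γ) :=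
    P_shift_le (by linarith) (by linarith) (by linarith)
  have hratio : P n (y+β) / P n (y+γ) ≤ 2 * 2^n := by
    rw [div_le_iff₀ hv2p]; linarith
  have hmain := div_sub_div_abs_le (u1 := P n (x+β)) (u2 := P n (y+β))
    (v1 := P n (x+γ)) (v2 := P n (y+γ)) hu2p.le hv1p hv2p
  have e1 : |P n (x+β) - P n (y+β)| ≤ 8*(n:ℝ)*2^n*(|x-y| * P n mg) := by
    have h := mul_le_mul_of_nonneg_left hZble (show (0:ℝ) ≤ |x-y| * (4*n) by positivity)
    calc |P n (x+β) - P n (y+β)| ≤ |x-y| * (4*n) * P n Zb := hu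
      _ ≤ |x-y| * (4*n) * (2*2^n*P n mg) := h
      _ = 8*(n:ℝ)*2^n*(|x-y| * P n mg) := by ring
  have ev : |P n (x+γ) - P n (y+γ)| ≤ 8*(n:ℝ)*2^n*(|x-y| * P n mg) := by
    have h := mul_le_mul_of_nonneg_left hZgle (show (0:ℝ) ≤ |x-y| * (4*n) by positivity)
    calc |P n (x+γ) - P n (y+γ)| ≤ |x-y| * (4*n) * P n Zg := hv
      _ ≤ |x-y| * (4*n) * (2*2^n*P n mg) := h
      _ = 8*(n:ℝ)*2^n*(|x-y| * P n mg) := by ring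
  have e2 : (P n (y+β)/P n (y+γ)) * |P n (x+γ) - P n (y+γ)|
      ≤ (2*2^n) * (8*(n:ℝ)*2^n*(|x-y| * P n mg)) := by
    apply mul_le_mul hratio ev (abs_nonneg _) (by positivity)
  have h8 : (8:ℝ)^n = 2^n * 2^n * 2^n := by
    rw [show (8:ℝ) = 2*2*2 by norm_num, mul_pow, mul_pow]
  have coeff : 8*(n:ℝ)*2^n + (2*2^n)*(8*(n:ℝ)*2^n) ≤ 24*(8:ℝ)^n := by
    rw [h8]
    have a1 : (n:ℝ)*2^n ≤ 2^n*2^n := mul_le_mul_of_nonneg_right hnle h2n.le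
    have a2 : (2:ℝ)^n*2^n ≤ 2^n*2^n*2^n := le_mul_of_one_le_right (by positivity) h1q
    have a3 : (n:ℝ)*(2^n*2^n) ≤ 2^n*(2^n*2^n) := mul_le_mul_of_nonneg_right hnle (by positivity)
    linarith [a1, a2, a3]
  have c2 := mul_le_mul_of_nonneg_right coeff
    (show (0:ℝ) ≤ |x-y| * P n mg from mul_nonneg habs hmp.le)
  have hnum : |P n (x+β) - P n (y+β)| + (P n (y+β)/P n (y+γ)) * |P n (x+γ) - P n (y+γ)|
      ≤ 24*(8:ℝ)^n * (|x-y| * P n mg) := by linarith [e1, e2, c2]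
  have c3 := mul_le_mul_of_nonneg_left hv1ge (show (0:ℝ) ≤ 24*(8:ℝ)^n*|x-y| by positivity)
  have hdiv : (|P n (x+β) - P n (y+β)| + (P n (y+β)/P n (y+γ)) * |P n (x+γ) - P n (y+γ)|)
      / P n (x+γ) ≤ 24 * 8^n * |x-y| := by
    rw [div_le_iff₀ hv1p]
    linarith [hnum, c3]
  linarith [hmain, hdiv]

lemma gauss_lip (i : ℕ) {β γ x y t : ℝ} (hβ : 1/2 ≤ β) (hγ : 1 ≤ γ) (hβγ : β ≤ γ + 1/2)
    (hx : |x - (i:ℝ)| ≤ 1/4) (hy : |y - (i:ℝ)| ≤ 1/4) (ht : 0 < t) (ht16 : t ≤ 1/16) :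
    |gaussHyp (1/2) (x+β) (x+γ) t - gaussHyp (1/2) (y+β) (y+γ) t| ≤ 768 * t * |x - y| := by
  have hI : (0:ℝ) ≤ (i:ℝ) := Nat.cast_nonneg i
  have hx1 : (i:ℝ) - 1/4 ≤ x := by cases abs_le.mp hx; linarith
  have hx2 : x ≤ (i:ℝ) + 1/4 := by cases abs_le.mp hx; linarith
  have hy1 : (i:ℝ) - 1/4 ≤ y := by cases abs_le.mp hy; linarith
  have hy2 : y ≤ (i:ℝ) + 1/4 := by cases abs_le.mp hy; linarith
  have ht2 : 2*t < 1 := by linarith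
  have hsx : Summable (gterm (x+β) (x+γ) t) :=
    gterm_summable_typeB (by linarith) (by linarith) (by linarith) ht.le ht2
  have hsy : Summable (gterm (y+β) (y+γ) t) :=
    gterm_summable_typeB (by linarith) (by linarith) (by linarith) ht.le ht2
  -- pointwise bound on term differences
  have hptw : ∀ n : ℕ, |gterm (x+β) (x+γ) t n - gterm (y+β) (y+γ) t n|
      ≤ (384 * t * |x - y|) * (1/2)^n := by
    intro n
    match n with
    | 0 => simp [gterm_zero]; positivity
    | Nat.succ m =>
      have hd := ratio_lip i hβ hγ hβγ hx hy (m+1)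
      have heq : gterm (x+β) (x+γ) t (m+1) - gterm (y+β) (y+γ) t (m+1)
          = (P (m+1) (1/2) * t^(m+1) / ((m+1).factorial : ℝ))
            * (P (m+1) (x+β)/P (m+1) (x+γ) - P (m+1) (y+β)/P (m+1) (y+γ)) := by
        unfold gterm; ring
      have hfpos : (0:ℝ) < ((m+1).factorial : ℝ) := by exact_mod_cast Nat.factorial_pos _
      have hcoef : 0 ≤ P (m+1) (1/2) * t^(m+1) / ((m+1).factorial : ℝ) := by
        have := P_pos (n := m+1) (show (0:ℝ) < 1/2 by norm_num)
        positivity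
      have hcoef2 : P (m+1) (1/2) * t^(m+1) / ((m+1).factorial : ℝ) ≤ t^(m+1) := by
        rw [div_le_iff₀ hfpos]
        have h1 : P (m+1) (1/2) ≤ ((m+1).factorial : ℝ) := P_half_le_factorial (m+1)
        have h2 : (0:ℝ) ≤ t^(m+1) := by positivity
        nlinarith
      rw [heq, abs_mul, abs_of_nonneg hcoef]
      have hb1 : |P (m+1) (x+β)/P (m+1) (x+γ) - P (m+1) (y+β)/P (m+1) (y+γ)|
          ≤ 24 * 8^(m+1) * |x-y| := hd
      have : P (m+1) (1/2) * t^(m+1) / ((m+1).factorial : ℝ)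
            * |P (m+1) (x+β)/P (m+1) (x+γ) - P (m+1) (y+β)/P (m+1) (y+γ)|
          ≤ t^(m+1) * (24 * 8^(m+1) * |x-y|) :=
        mul_le_mul hcoef2 hb1 (abs_nonneg _) (by positivity)
      calc P (m+1) (1/2) * t^(m+1) / ((m+1).factorial : ℝ)
            * |P (m+1) (x+β)/P (m+1) (x+γ) - P (m+1) (y+β)/P (m+1) (y+γ)|
          ≤ t^(m+1) * (24 * 8^(m+1) * |x-y|) := this
        _ = 24 * (8*t)^(m+1) * |x-y| := by rw [mul_pow]; ring
        _ ≤ (384 * t * |x - y|) * (1/2)^(m+1) := by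
            have h8t : (8*t)^(m+1) ≤ (8*t) * (1/2)^m := by
              have h1 : (0:ℝ) ≤ 8*t := by linarith
              have h2 : 8*t ≤ 1/2 := by linarith
              calc (8*t)^(m+1) = (8*t) * (8*t)^m := by ring
                _ ≤ (8*t) * (1/2)^m := by
                    apply mul_le_mul_of_nonneg_left (pow_le_pow_left₀ h1 h2 m) h1
            have habs : (0:ℝ) ≤ |x-y| := abs_nonneg _
            have : 24 * (8*t)^(m+1) ≤ 384 * t * (1/2)^(m+1) := by
              have : (384:ℝ) * t * (1/2)^(m+1) = 24 * ((8*t) * (1/2)^m) := by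
                rw [pow_succ]; ring
              rw [this]
              linarith [mul_le_mul_of_nonneg_left h8t (show (0:ℝ) ≤ 24 by norm_num)]
            nlinarith [this, habs]
  -- summability of the difference bound
  have hsum_bound : Summable (fun n : ℕ => (384 * t * |x - y|) * (1/2)^n) :=
    (summable_geometric_of_lt_one (by norm_num) (by norm_num)).mul_left _
  have hsd : Summable (fun n => |gterm (x+β) (x+γ) t n - gterm (y+β) (y+γ) t n|) :=
    Summable.of_nonneg_of_le (fun n => abs_nonneg _) hptw hsum_bound
  have key : gaussHyp (1/2) (x+β) (x+γ) t - gaussHyp (1/2) (y+β) (y+γ) t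
      = ∑' n, (gterm (x+β) (x+γ) t n - gterm (y+β) (y+γ) t n) := by
    rw [gaussHyp_eq, gaussHyp_eq, Summable.tsum_sub hsx hsy]
  rw [key]
  have h1 : |∑' n, (gterm (x+β) (x+γ) t n - gterm (y+β) (y+γ) t n)|
      ≤ ∑' n, |gterm (x+β) (x+γ) t n - gterm (y+β) (y+γ) t n| := by
    have h1' := norm_tsum_le_tsum_norm
      (f := fun n => gterm (x+β) (x+γ) t n - gterm (y+β) (y+γ) t n)
      (by simpa only [Real.norm_eq_abs] using hsd)
    simpa only [Real.norm_eq_abs] using h1'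
  have h2 : ∑' n, |gterm (x+β) (x+γ) t n - gterm (y+β) (y+γ) t n|
      ≤ ∑' n : ℕ, (384 * t * |x - y|) * (1/2)^n := Summable.tsum_le_tsum hptw hsd hsum_bound
  have h3 : ∑' n : ℕ, (384 * t * |x - y|) * (1/2)^n = (384 * t * |x - y|) * 2 := by
    rw [tsum_mul_left, tsum_geometric_of_lt_one (by norm_num) (by norm_num)]
    norm_num
  calc |∑' n, (gterm (x+β) (x+γ) t n - gterm (y+β) (y+γ) t n)|
      ≤ ∑' n : ℕ, (384 * t * |x - y|) * (1/2)^n := le_trans h1 h2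
    _ = (384 * t * |x - y|) * 2 := h3
    _ = 768 * t * |x - y| := by ring

lemma Gamma_poch {x : ℝ} (hx : 0 < x) (n : ℕ) : Real.Gamma (x + n) = P n x * Real.Gamma x := by
  induction n with
  | zero => simp [P_zero]
  | succ n ih =>
    have hxn : x + (n:ℝ) ≠ 0 := by positivity
    have : x + ((n+1 : ℕ):ℝ) = (x + n) + 1 := by push_cast; ring
    rw [this, Real.Gamma_add_one hxn, ih, P_succ]
    ring

noncomputable def prefA (i : ℕ) (t j : ℝ) : ℝ :=
  ((ascPochhammer ℝ (i + 1)).eval (-(1/2)) * (Real.Gamma (j + 3/2) / Real.Gamma (1/2)) /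
      ((i.factorial : ℝ) * Real.Gamma (j + 1))) * t ^ (((i : ℝ) + j) / 2 + 1)

noncomputable def gg1 (t j : ℝ) : ℝ := gaussHyp (1/2) (j + 1/2) (j + 2) t
noncomputable def gg2 (t j : ℝ) : ℝ := gaussHyp (1/2) (j + 3/2) (j + 1) t

lemma kernelExpr_eq (i : ℕ) (j t : ℝ) :
    kernelExpr i j t = prefA i t j * ((1 / ((i:ℝ) - j)) *
      ((1 / (j + 1)) * gg2 t (i:ℝ) * gg1 t j - (1 / ((i:ℝ) + 1)) * gg2 t j * gg1 t (i:ℝ))) := by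
  unfold kernelExpr prefA gg1 gg2
  ring

lemma prefA_at (i : ℕ) {t : ℝ} (ht : 0 < t) :
    prefA i t (i:ℝ) = (P (i+1) (-(1/2)) * P (i+1) (1/2) / ((i.factorial : ℝ))^2) * t^(i+1) := by
  unfold prefA
  have h1 : (i:ℝ) + 3/2 = 1/2 + ((i+1 : ℕ):ℝ) := by push_cast; ring
  have h2 : Real.Gamma ((i:ℝ) + 3/2) = P (i+1) (1/2) * Real.Gamma (1/2) := by
    rw [h1, Gamma_poch (by norm_num)]
  have h3 : Real.Gamma ((i:ℝ) + 1) = (i.factorial : ℝ) := Real.Gamma_nat_eq_factorial i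
  have h4 : Real.Gamma (1/2 : ℝ) ≠ 0 := ne_of_gt (Real.Gamma_pos_of_pos (by norm_num))
  have h5 : ((i:ℝ) + (i:ℝ))/2 + 1 = ((i+1 : ℕ):ℝ) := by push_cast; ring
  have h6 : t ^ (((i:ℝ) + (i:ℝ))/2 + 1) = t ^ (i+1 : ℕ) := by
    rw [h5, Real.rpow_natCast]
  have h7 : (i.factorial : ℝ) ≠ 0 := by exact_mod_cast Nat.factorial_ne_zero i
  rw [h2, h3, h6, mul_div_cancel_right₀ _ h4]
  unfold P
  ring

lemma prefA_contAt (i : ℕ) {t : ℝ} (ht : 0 < t) :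
    ContinuousAt (prefA i t) (i:ℝ) := by
  have hg1 : ContinuousAt (fun j : ℝ => Real.Gamma (j + 3/2)) (i:ℝ) := by
    have h := (Real.differentiableAt_Gamma (s := (i:ℝ) + 3/2) ?_).continuousAt
    · exact ContinuousAt.comp (f := fun j : ℝ => j + 3/2) h ((continuous_add_right _).continuousAt)
    · intro m
      have : (0:ℝ) < (i:ℝ) + 3/2 := by positivity
      have hm : -(m:ℝ) ≤ 0 := neg_nonpos.mpr (Nat.cast_nonneg m)
      linarith
  have hg2 : ContinuousAt (fun j : ℝ => Real.Gamma (j + 1)) (i:ℝ) := by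
    have h := (Real.differentiableAt_Gamma (s := (i:ℝ) + 1) ?_).continuousAt
    · exact ContinuousAt.comp (f := fun j : ℝ => j + 1) h ((continuous_add_right _).continuousAt)
    · intro m
      have : (0:ℝ) < (i:ℝ) + 1 := by positivity
      have hm : -(m:ℝ) ≤ 0 := neg_nonpos.mpr (Nat.cast_nonneg m)
      linarith
  have hg2ne : Real.Gamma ((i:ℝ) + 1) ≠ 0 := by
    rw [Real.Gamma_nat_eq_factorial i]
    exact_mod_cast Nat.factorial_ne_zero i
  have hpow : ContinuousAt (fun j : ℝ => t ^ (((i:ℝ) + j) / 2 + 1)) (i:ℝ) := by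
    have heq : (fun j : ℝ => t ^ (((i:ℝ) + j) / 2 + 1))
        = fun j : ℝ => Real.exp (Real.log t * (((i:ℝ) + j) / 2 + 1)) := by
      funext j
      rw [Real.rpow_def_of_pos ht]
    rw [heq]
    exact (Real.continuous_exp.comp (continuous_const.mul
      (((continuous_const.add continuous_id).div_const 2).add continuous_const))).continuousAt
  unfold prefA
  apply ContinuousAt.mul _ hpow
  apply ContinuousAt.div
  · exact continuousAt_const.mul (hg1.div_const _)
  · exact continuousAt_const.mul hg2
  · exact mul_ne_zero (by exact_mod_cast Nat.factorial_ne_zero i) hg2ne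

lemma P_neg_half (n : ℕ) : P (n+1) (-(1/2)) = -(1/2) * P n (1/2) := by
  induction n with
  | zero => simp [P_succ, P_zero]
  | succ n ih =>
    rw [P_succ, ih, P_succ (n := n) (x := 1/2)]
    push_cast
    ring

lemma prefA_abs_le (i : ℕ) {t : ℝ} (ht : 0 < t) :
    |prefA i t (i:ℝ)| ≤ ((i:ℝ)+1)^2 * t^(i+1) := by
  rw [prefA_at i ht, abs_mul]
  have h1 : |P (i+1) (-(1/2)) * P (i+1) (1/2) / ((i.factorial : ℝ))^2| ≤ ((i:ℝ)+1)^2 := by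
    have hp1 : |P (i+1) (-(1/2))| = (1/2) * P i (1/2) := by
      rw [P_neg_half, abs_mul]
      rw [abs_of_pos (P_pos (by norm_num : (0:ℝ) < 1/2))]
      norm_num
    have hp2 : P i (1/2) ≤ (i.factorial : ℝ) := P_half_le_factorial i
    have hp3 : P (i+1) (1/2) ≤ ((i+1).factorial : ℝ) := P_half_le_factorial (i+1)
    have hp3' : 0 < P (i+1) (1/2) := P_pos (by norm_num)
    have hfac : (0:ℝ) < (i.factorial : ℝ) := by exact_mod_cast Nat.factorial_pos i
    have hfs : ((i+1).factorial : ℝ) = ((i:ℝ)+1) * (i.factorial : ℝ) := by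
      push_cast [Nat.factorial_succ]; ring
    rw [abs_div, abs_mul, hp1, abs_of_pos hp3']
    rw [abs_of_pos (by positivity : (0:ℝ) < ((i.factorial : ℝ))^2)]
    rw [div_le_iff₀ (by positivity)]
    have hi1 : (1:ℝ) ≤ (i:ℝ) + 1 := by have := Nat.cast_nonneg (α := ℝ) i; linarith
    have hp3'' : P (i+1) (1/2) ≤ ((i:ℝ)+1) * (i.factorial : ℝ) := by rw [hfs] at hp3; exact hp3
    have hppos : 0 < P i (1/2) := P_pos (by norm_num)
    have hm := mul_le_mul hp2 hp3'' hp3'.le hfac.le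
    have hsq : ((i:ℝ)+1) ≤ ((i:ℝ)+1)^2 := by nlinarith [hi1]
    have h2 := mul_le_mul_of_nonneg_right hsq (mul_pos hfac hfac).le
    have h3 : (0:ℝ) ≤ ((i:ℝ)+1)^2 * ((i.factorial:ℝ) * (i.factorial:ℝ)) := by positivity
    nlinarith [hm, h2, h3]
  have h2 : |t ^ (i+1)| = t^(i+1) := abs_of_pos (by positivity)
  rw [h2]
  exact mul_le_mul_of_nonneg_right h1 (by positivity)

noncomputable def coefC (i : ℕ) : ℝ :=
  (ascPochhammer ℝ (i + 1)).eval (1/2 : ℝ) * (ascPochhammer ℝ (i + 1)).eval (-(1/2) : ℝ) /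
    ((i + 1).factorial : ℝ) ^ 2

lemma coefC_eq (i : ℕ) : coefC i = P (i+1) (1/2) * P (i+1) (-(1/2)) / ((i+1).factorial : ℝ)^2 := rfl

lemma coefC_ne (i : ℕ) : coefC i ≠ 0 := by
  rw [coefC_eq]
  have h1 : 0 < P (i+1) (1/2) := P_pos (by norm_num)
  have h2 : P (i+1) (-(1/2)) < 0 := by
    rw [P_neg_half]
    have := P_pos (n := i) (show (0:ℝ) < 1/2 by norm_num)
    nlinarith
  have h3 : (0:ℝ) < ((i+1).factorial : ℝ)^2 := by
    have : (0:ℝ) < ((i+1).factorial : ℝ) := by exact_mod_cast Nat.factorial_pos (i+1)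
    positivity
  have : P (i+1) (1/2) * P (i+1) (-(1/2)) < 0 := mul_neg_of_pos_of_neg h1 h2
  exact ne_of_lt (div_neg_of_neg_of_pos this h3)

lemma coefC_prefA (i : ℕ) {t : ℝ} (ht : 0 < t) :
    coefC i * t^(i+1) = prefA i t (i:ℝ) / ((i:ℝ)+1)^2 := by
  rw [prefA_at i ht, coefC_eq]
  have hfs : ((i+1).factorial : ℝ) = ((i:ℝ)+1) * (i.factorial : ℝ) := by
    push_cast [Nat.factorial_succ]; ring
  have h1 : (i.factorial : ℝ) ≠ 0 := by exact_mod_cast Nat.factorial_ne_zero i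
  have h2 : ((i:ℝ)+1) ≠ 0 := by positivity
  rw [hfs]
  field_simp

lemma coefC_abs_le (i : ℕ) : |coefC i| ≤ 1 := by
  rw [coefC_eq]
  have h1 : 0 < P (i+1) (1/2) := P_pos (by norm_num)
  have hfp : (0:ℝ) < ((i+1).factorial : ℝ) := by exact_mod_cast Nat.factorial_pos (i+1)
  have hp1 : |P (i+1) (-(1/2))| = (1/2) * P i (1/2) := by
    rw [P_neg_half, abs_mul, abs_of_pos (P_pos (by norm_num : (0:ℝ) < 1/2))]
    norm_num
  have hle1 : P (i+1) (1/2) ≤ ((i+1).factorial : ℝ) := P_half_le_factorial (i+1)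
  have hle2 : P i (1/2) ≤ (i.factorial : ℝ) := P_half_le_factorial i
  have hle3 : (i.factorial : ℝ) ≤ ((i+1).factorial : ℝ) := by
    exact_mod_cast Nat.factorial_le (by omega : i ≤ i+1)
  have hppos : 0 < P i (1/2) := P_pos (by norm_num)
  rw [abs_div, abs_mul, hp1, abs_of_pos h1, abs_of_pos (by positivity : (0:ℝ) < ((i+1).factorial : ℝ)^2)]
  rw [div_le_one (by positivity)]
  nlinarith [mul_le_mul hle1 (le_trans hle2 hle3) hppos.le hfp.le]

lemma abstract_W_est {F1 F2 G1 G2 I j t : ℝ}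
    (hjne : j ≠ I) (hj34 : (3:ℝ)/4 ≤ j+1) (hI1 : (1:ℝ) ≤ I+1)
    (hF1a : 1 ≤ F1) (hF1b : F1 ≤ 1+5*t)
    (hF2a : 1 ≤ F2) (hF2b : F2 ≤ 1+2*t)
    (hG1a : 1 ≤ G1) (hG1b : G1 ≤ 1+2*t)
    (hL1 : |G1 - F2| ≤ 768*t*|j-I|) (hL2 : |F1 - G2| ≤ 768*t*|j-I|)
    (ht : 0 < t) (ht16 : t ≤ 1/16) :
    |(1/(I-j)) * ((1/(j+1)) * F1 * G1 - (1/(I+1)) * G2 * F2) - 1/((I+1)^2)|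
      ≤ 3100*t + 2*|j - I| := by
  have hIjne : I - j ≠ 0 := sub_ne_zero.mpr (Ne.symm hjne)
  have habs0 : 0 < |j - I| := abs_pos.mpr (sub_ne_zero.mpr hjne)
  have hj1ne : j + 1 ≠ 0 := by linarith
  have hI1ne : I + 1 ≠ 0 := by linarith
  have hF1le : F1 ≤ 2 := by linarith
  have hF2le : F2 ≤ 2 := by linarith
  have hW : (1/(I-j)) * ((1/(j+1)) * F1 * G1 - (1/(I+1)) * G2 * F2)
      = F1 * G1 / ((j+1)*(I+1)) + (1/(I+1)) * ((F1 * (G1 - F2) + (F1 - G2) * F2) / (I - j)) := by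
    field_simp
    ring
  have hN : |F1 * (G1 - F2) + (F1 - G2) * F2| ≤ 3072 * t * |j - I| := by
    calc |F1 * (G1 - F2) + (F1 - G2) * F2| ≤ |F1 * (G1 - F2)| + |(F1 - G2) * F2| := abs_add_le _ _
      _ = |F1| * |G1 - F2| + |F1 - G2| * |F2| := by rw [abs_mul, abs_mul]
      _ ≤ 2 * (768*t*|j-I|) + (768*t*|j-I|) * 2 := by
          apply add_le_add
          · apply mul_le_mul _ hL1 (abs_nonneg _) (by norm_num)
            rw [abs_of_nonneg (by linarith)]; exact hF1le
          · apply mul_le_mul hL2 _ (abs_nonneg _) (by positivity)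
            rw [abs_of_nonneg (by linarith)]; exact hF2le
      _ = 3072 * t * |j - I| := by ring
  have hfrac : |(F1 * (G1 - F2) + (F1 - G2) * F2) / (I - j)| ≤ 3072 * t := by
    rw [abs_div, abs_sub_comm I j, div_le_iff₀ habs0]
    exact hN
  have hT2 : |(1/(I+1)) * ((F1 * (G1 - F2) + (F1 - G2) * F2) / (I - j))| ≤ 3072 * t := by
    rw [abs_mul]
    have e1 : |1/(I+1)| ≤ 1 := by
      rw [abs_of_pos (by positivity : (0:ℝ) < 1/(I+1)), div_le_one (by linarith)]
      linarith
    calc |1/(I+1)| * |(F1 * (G1 - F2) + (F1 - G2) * F2) / (I - j)|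
        ≤ 1 * (3072 * t) := mul_le_mul e1 hfrac (abs_nonneg _) (by norm_num)
      _ = 3072 * t := by ring
  have hT1 : |F1 * G1 / ((j+1)*(I+1)) - 1/((I+1)^2)| ≤ 12*t + 2*|j - I| := by
    have key : F1 * G1 / ((j+1)*(I+1)) - 1/((I+1)^2)
        = (F1 * G1 - 1)/((j+1)*(I+1)) + (I - j)/((j+1)*(I+1)^2) := by
      field_simp
      ring
    have b1 : |F1 * G1 - 1| ≤ 9*t := by
      have hprod1 : 1 ≤ F1 * G1 := by nlinarith [hF1a, hG1a]
      have hprod2 : F1 * G1 ≤ 1 + 9*t := by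
        have hm := mul_le_mul hF1b hG1b (by linarith) (by linarith)
        have htt := mul_le_mul_of_nonneg_left ht16 ht.le
        nlinarith [hm, htt]
      rw [abs_of_nonneg (by linarith)]
      linarith
    have hden1 : (3:ℝ)/4 ≤ (j+1)*(I+1) := by
      have := mul_le_mul hj34 hI1 (by norm_num) (by linarith)
      linarith
    have hsq : (1:ℝ) ≤ (I+1)^2 := by nlinarith [hI1]
    have hden2 : (3:ℝ)/4 ≤ (j+1)*(I+1)^2 := by
      have := mul_le_mul hj34 hsq (by norm_num) (by linarith)
      linarith
    have c1 : |(F1 * G1 - 1)/((j+1)*(I+1))| ≤ 12*t := by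
      rw [abs_div, abs_of_pos (by linarith : (0:ℝ) < (j+1)*(I+1)), div_le_iff₀ (by linarith)]
      have := mul_le_mul_of_nonneg_left hden1 (by positivity : (0:ℝ) ≤ 12*t)
      linarith [b1]
    have c2 : |(I - j)/((j+1)*(I+1)^2)| ≤ 2*|j - I| := by
      rw [abs_div, abs_of_pos (by linarith : (0:ℝ) < (j+1)*(I+1)^2), div_le_iff₀ (by linarith),
        abs_sub_comm I j]
      have := mul_le_mul_of_nonneg_left hden2 (by positivity : (0:ℝ) ≤ 2*|j - I|)
      linarith [abs_nonneg (j - I)]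
    calc |F1 * G1 / ((j+1)*(I+1)) - 1/((I+1)^2)|
        = |(F1 * G1 - 1)/((j+1)*(I+1)) + (I - j)/((j+1)*(I+1)^2)| := by rw [key]
      _ ≤ |(F1 * G1 - 1)/((j+1)*(I+1))| + |(I - j)/((j+1)*(I+1)^2)| := abs_add_le _ _
      _ ≤ 12*t + 2*|j - I| := add_le_add c1 c2
  rw [hW]
  have hsplit : F1 * G1 / ((j+1)*(I+1)) + (1/(I+1)) * ((F1 * (G1 - F2) + (F1 - G2) * F2) / (I - j))
      - 1/((I+1)^2)
      = (F1 * G1 / ((j+1)*(I+1)) - 1/((I+1)^2))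
        + (1/(I+1)) * ((F1 * (G1 - F2) + (F1 - G2) * F2) / (I - j)) := by ring
  rw [hsplit]
  calc |(F1 * G1 / ((j+1)*(I+1)) - 1/((I+1)^2))
        + (1/(I+1)) * ((F1 * (G1 - F2) + (F1 - G2) * F2) / (I - j))|
      ≤ |F1 * G1 / ((j+1)*(I+1)) - 1/((I+1)^2)|
        + |(1/(I+1)) * ((F1 * (G1 - F2) + (F1 - G2) * F2) / (I - j))| := abs_add_le _ _
    _ ≤ (12*t + 2*|j - I|) + 3072*t := add_le_add hT1 hT2
    _ ≤ 3100*t + 2*|j - I| := by linarith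

lemma assemble_est {Aj AI W q s : ℝ} (hq1 : 0 < q) (hq2 : q ≤ 1) (hWq : |W - q| ≤ s) :
    |Aj * W - AI * q| ≤ |Aj| * s + |Aj - AI| := by
  have key : Aj * W - AI * q = Aj * (W - q) + (Aj - AI) * q := by ring
  rw [key]
  calc |Aj * (W - q) + (Aj - AI) * q| ≤ |Aj * (W - q)| + |(Aj - AI) * q| := abs_add_le _ _
    _ = |Aj| * |W - q| + |Aj - AI| * |q| := by rw [abs_mul, abs_mul]
    _ ≤ |Aj| * s + |Aj - AI| * 1 := by
        apply add_le_add
        · exact mul_le_mul_of_nonneg_left hWq (abs_nonneg _)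
        · apply mul_le_mul_of_nonneg_left _ (abs_nonneg _)
          rw [abs_of_pos hq1]; exact hq2
    _ = |Aj| * s + |Aj - AI| := by ring

lemma kernel_ptwise (i : ℕ) {j t : ℝ} (hj : |j - (i:ℝ)| ≤ 1/4) (hjne : j ≠ (i:ℝ))
    (ht : 0 < t) (ht16 : t ≤ 1/16) :
    |kernelExpr i j t - coefC i * t^(i+1)|
      ≤ |prefA i t j| * (3100*t + 2*|j - (i:ℝ)|) + |prefA i t j - prefA i t (i:ℝ)| := by
  have hI : (0:ℝ) ≤ (i:ℝ) := Nat.cast_nonneg i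
  have hj1 : (i:ℝ) - 1/4 ≤ j := by cases abs_le.mp hj; linarith
  have hj2 : j ≤ (i:ℝ) + 1/4 := by cases abs_le.mp hj; linarith
  have hj34 : (3:ℝ)/4 ≤ j + 1 := by linarith
  have hI1 : (1:ℝ) ≤ (i:ℝ) + 1 := by linarith
  have hII : |(i:ℝ) - (i:ℝ)| ≤ 1/4 := by simp
  have hF1 : 1 ≤ gg2 t (i:ℝ) ∧ gg2 t (i:ℝ) ≤ 1 + 5*t :=
    gauss_bound_typeB (by positivity) (by linarith) (by linarith) ht ht16
  have hF2 : 1 ≤ gg1 t (i:ℝ) ∧ gg1 t (i:ℝ) ≤ 1 + 2*t :=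
    gauss_bound_typeA (by linarith) (by linarith) ht ht16
  have hG1j : 1 ≤ gg1 t j ∧ gg1 t j ≤ 1 + 2*t :=
    gauss_bound_typeA (by linarith) (by linarith) ht ht16
  have hL1 : |gg1 t j - gg1 t (i:ℝ)| ≤ 768*t*|j - (i:ℝ)| :=
    gauss_lip i (β := 1/2) (γ := 2) (x := j) (y := (i:ℝ)) (t := t)
      (by norm_num) (by norm_num) (by norm_num) hj hII ht ht16
  have hL2 : |gg2 t (i:ℝ) - gg2 t j| ≤ 768*t*|j - (i:ℝ)| := by
    have h := gauss_lip i (β := 3/2) (γ := 1) (x := (i:ℝ)) (y := j) (t := t)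
      (by norm_num) (by norm_num) (by norm_num) hII hj ht ht16
    rw [abs_sub_comm (i:ℝ) j] at h
    exact h
  have hWq : |(1/((i:ℝ)-j)) * ((1/(j+1)) * gg2 t (i:ℝ) * gg1 t j
      - (1/((i:ℝ)+1)) * gg2 t j * gg1 t (i:ℝ)) - 1/(((i:ℝ)+1)^2)|
      ≤ 3100*t + 2*|j - (i:ℝ)| :=
    abstract_W_est hjne hj34 hI1 hF1.1 hF1.2 hF2.1 hF2.2 hG1j.1 hG1j.2 hL1 hL2 ht ht16
  have hq1 : (0:ℝ) < 1/(((i:ℝ)+1)^2) := by positivity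
  have hq2 : 1/(((i:ℝ)+1)^2) ≤ 1 := by
    rw [div_le_one (by positivity)]; nlinarith
  have hcoef : coefC i * t^(i+1) = prefA i t (i:ℝ) * (1/(((i:ℝ)+1)^2)) := by
    rw [coefC_prefA i ht]
    field_simp
  rw [kernelExpr_eq, hcoef]
  exact assemble_est hq1 hq2 hWq

lemma kernel_est {Kd : ℕ → ℝ → ℝ} (i : ℕ) {t : ℝ} (ht : 0 < t) (ht16 : t ≤ 1/16)
    (hKt : Tendsto (fun j => kernelExpr i j t) (𝓝[≠] (i:ℝ)) (𝓝 (Kd i t))) :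
    |Kd i t - coefC i * t^(i+1)| ≤ (3100*((i:ℝ)+1)^2 + 1) * t^(i+2) := by
  have hA : Tendsto (prefA i t) (𝓝[≠] (i:ℝ)) (𝓝 (prefA i t (i:ℝ))) :=
    ((prefA_contAt i ht).tendsto).mono_left nhdsWithin_le_nhds
  have habsj : Tendsto (fun j : ℝ => |j - (i:ℝ)|) (𝓝[≠] (i:ℝ)) (𝓝 0) := by
    have hc : Continuous (fun j : ℝ => |j - (i:ℝ)|) :=
      (continuous_id.sub continuous_const).abs
    have := hc.tendsto (i:ℝ)
    simp only [sub_self, abs_zero] at this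
    exact this.mono_left nhdsWithin_le_nhds
  -- the bounding function tends to |prefA i t i| * (3100 t)
  have hU : Tendsto (fun j => |prefA i t j| * (3100*t + 2*|j - (i:ℝ)|)
      + |prefA i t j - prefA i t (i:ℝ)|) (𝓝[≠] (i:ℝ))
      (𝓝 (|prefA i t (i:ℝ)| * (3100*t + 2*0) + |prefA i t (i:ℝ) - prefA i t (i:ℝ)|)) := by
    exact (hA.abs.mul (tendsto_const_nhds.add (habsj.const_mul 2))).add
      ((hA.sub tendsto_const_nhds).abs)
  have hUlim : |prefA i t (i:ℝ)| * (3100*t + 2*0) + |prefA i t (i:ℝ) - prefA i t (i:ℝ)|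
      < (3100*((i:ℝ)+1)^2 + 1) * t^(i+2) := by
    simp only [sub_self, abs_zero, mul_zero, add_zero]
    have h1 : |prefA i t (i:ℝ)| ≤ ((i:ℝ)+1)^2 * t^(i+1) := prefA_abs_le i ht
    have h2 : (0:ℝ) < t^(i+1) := pow_pos ht _
    have h3 : (0:ℝ) < t^(i+2) := pow_pos ht _
    have h4 : t^(i+2) = t^(i+1) * t := by rw [pow_succ]
    have h5 : |prefA i t (i:ℝ)| * (3100*t) ≤ 3100*((i:ℝ)+1)^2 * t^(i+2) := by
      rw [h4]
      have := mul_le_mul_of_nonneg_right h1 (by positivity : (0:ℝ) ≤ 3100*t)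
      calc |prefA i t (i:ℝ)| * (3100*t) ≤ ((i:ℝ)+1)^2 * t^(i+1) * (3100*t) := this
        _ = 3100*((i:ℝ)+1)^2 * (t^(i+1) * t) := by ring
    nlinarith [h3, h5]
  have hve : ∀ᶠ j in 𝓝[≠] (i:ℝ), |prefA i t j| * (3100*t + 2*|j - (i:ℝ)|)
      + |prefA i t j - prefA i t (i:ℝ)| < (3100*((i:ℝ)+1)^2 + 1) * t^(i+2) :=
    hU.eventually_lt_const hUlim
  have hball : ∀ᶠ j in 𝓝[≠] (i:ℝ), |j - (i:ℝ)| ≤ 1/4 := by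
    have h1 : ∀ᶠ j in 𝓝 (i:ℝ), |j - (i:ℝ)| ≤ 1/4 := by
      apply Metric.eventually_nhds_iff.mpr
      exact ⟨1/4, by norm_num, fun {y} hy => le_of_lt (by rwa [Real.dist_eq] at hy)⟩
    exact h1.filter_mono nhdsWithin_le_nhds
  have hne : ∀ᶠ j in 𝓝[≠] (i:ℝ), j ≠ (i:ℝ) := eventually_mem_nhdsWithin
  have hev2 : ∀ᶠ j in 𝓝[≠] (i:ℝ),
      |kernelExpr i j t - coefC i * t^(i+1)| ≤ (3100*((i:ℝ)+1)^2 + 1) * t^(i+2) := by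
    filter_upwards [hball, hne, hve] with j h1 h2 h3
    exact le_trans (kernel_ptwise i h1 h2 ht ht16) (le_of_lt h3)
  have hlim : Tendsto (fun j => |kernelExpr i j t - coefC i * t^(i+1)|) (𝓝[≠] (i:ℝ))
      (𝓝 (|Kd i t - coefC i * t^(i+1)|)) := (hKt.sub_const _).abs
  exact le_of_tendsto hlim hev2

lemma ratio_tendsto (i : ℕ) (g : ℝ → ℝ) (C : ℝ) (hC : 0 ≤ C)
    (hg : ∀ t : ℝ, 0 < t → t ≤ 1/16 → |g t - coefC i * t^(i+1)| ≤ C * t^(i+2)) :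
    Tendsto (fun t => g t / (coefC i * t^(i+1))) (𝓝[>] (0:ℝ)) (𝓝 1) := by
  have hc := coefC_ne i
  have hcabs : 0 < |coefC i| := abs_pos.mpr hc
  have hlin : Tendsto (fun t : ℝ => (C/|coefC i|) * t) (𝓝[>] (0:ℝ)) (𝓝 0) := by
    have h : Tendsto (fun t : ℝ => (C/|coefC i|) * t) (𝓝 (0:ℝ)) (𝓝 ((C/|coefC i|) * 0)) :=
      (continuous_const.mul continuous_id).tendsto 0
    rw [mul_zero] at h
    exact (h.mono_left nhdsWithin_le_nhds)
  have hev : ∀ᶠ t in 𝓝[>] (0:ℝ), |g t / (coefC i * t^(i+1)) - 1| ≤ (C/|coefC i|) * t := by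
    have h16 : ∀ᶠ t in 𝓝 (0:ℝ), |t| < 1/16 := by
      apply Metric.eventually_nhds_iff.mpr
      exact ⟨1/16, by norm_num, fun {y} hy => by
        rw [Real.dist_eq, sub_zero] at hy; exact hy⟩
    filter_upwards [h16.filter_mono nhdsWithin_le_nhds, self_mem_nhdsWithin] with t h1 h2
    have ht : 0 < t := h2
    have ht16 : t ≤ 1/16 := le_of_lt (lt_of_abs_lt h1)
    have htp : (0:ℝ) < t^(i+1) := pow_pos ht _
    have hne : coefC i * t^(i+1) ≠ 0 := mul_ne_zero hc (ne_of_gt htp)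
    rw [div_sub_one hne, abs_div, abs_mul, abs_of_pos htp]
    rw [div_le_iff₀ (by positivity)]
    have heq : C/|coefC i| * t * (|coefC i| * t^(i+1)) = C * t^(i+2) := by
      field_simp
      ring
    rw [heq]
    exact hg t ht ht16
  have hz : Tendsto (fun t => g t / (coefC i * t^(i+1)) - 1) (𝓝[>] (0:ℝ)) (𝓝 0) := by
    apply squeeze_zero_norm' _ hlin
    simpa only [Real.norm_eq_abs] using hev
  have h2 : Tendsto (fun t : ℝ => (g t / (coefC i * t^(i+1)) - 1) + 1) (𝓝[>] (0:ℝ))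
      (𝓝 (0+1)) := hz.add tendsto_const_nhds
  simpa using h2

lemma sq_le_four_pow (i : ℕ) : ((i:ℝ)+1)^2 ≤ 4^i := by
  have h := nat_add_one_le_two_pow i
  have h0 : (0:ℝ) ≤ (i:ℝ)+1 := by positivity
  have h2 : ((i:ℝ)+1)^2 ≤ ((2:ℝ)^i)^2 := by nlinarith
  have h3 : ((2:ℝ)^i)^2 = ((2:ℝ)^2)^i := by rw [← pow_mul, ← pow_mul, Nat.mul_comm]
  calc ((i:ℝ)+1)^2 ≤ ((2:ℝ)^i)^2 := h2
    _ = 4^i := by rw [h3]; norm_num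

lemma Kd_abs_le {Kd : ℕ → ℝ → ℝ}
    (hK : ∀ (i : ℕ) (t : ℝ), 0 < t → t < 1 →
      Tendsto (fun j => kernelExpr i j t) (𝓝[≠] (i : ℝ)) (𝓝 (Kd i t)))
    (m : ℕ) {t : ℝ} (ht : 0 < t) (ht16 : t ≤ 1/16) :
    |Kd m t| ≤ 3200 * 4^m * t^(m+1) := by
  have h := kernel_est m ht ht16 (hK m t ht (by linarith))
  have h0 : |Kd m t| - |coefC m * t^(m+1)| ≤ |Kd m t - coefC m * t^(m+1)| :=
    abs_sub_abs_le_abs_sub _ _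
  rw [abs_mul, abs_of_pos (pow_pos ht _)] at h0
  have h2 : |coefC m| * t^(m+1) ≤ 1 * t^(m+1) :=
    mul_le_mul_of_nonneg_right (coefC_abs_le m) (by positivity)
  have h3 : t^(m+2) ≤ t^(m+1) := by
    rw [pow_succ]
    have := pow_pos ht (m+1)
    nlinarith
  have h4 : (3100*((m:ℝ)+1)^2+1) * t^(m+2) ≤ (3100*4^m+1) * t^(m+1) := by
    have hs := sq_le_four_pow m
    have htp : (0:ℝ) < t^(m+2) := pow_pos ht _
    have htp1 : (0:ℝ) < t^(m+1) := pow_pos ht _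
    nlinarith [mul_le_mul_of_nonneg_right hs htp.le]
  have h5 : (1:ℝ) ≤ 4^m := one_le_pow₀ (by norm_num)
  have htp1 : (0:ℝ) < t^(m+1) := pow_pos ht _
  nlinarith [h, h0, h2, h3, h4, h5, htp1]


/-- Leading small-`t` behaviour of the discrete form factor sum for `p = 1`:
`K(i,i) ~ [(1/2)_{i+1}(-1/2)_{i+1}/((i+1)!)²] t^{i+1}` as `t → 0⁺`, and consequently
`∑_{n₁ ≥ n} K(n₁,n₁) ~ [(1/2)_{n+1}(-1/2)_{n+1}/((n+1)!)²] t^{n+1}` as `t → 0⁺`. -/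
theorem diagonal_kernel_small_t (Kd : ℕ → ℝ → ℝ)
    (hK : ∀ (i : ℕ) (t : ℝ), 0 < t → t < 1 →
      Tendsto (fun j => kernelExpr i j t) (𝓝[≠] (i : ℝ)) (𝓝 (Kd i t)))
    (i n : ℕ) :
    Tendsto (fun t : ℝ => Kd i t /
        (((ascPochhammer ℝ (i + 1)).eval (1/2 : ℝ) * (ascPochhammer ℝ (i + 1)).eval (-(1/2) : ℝ) /
          ((i + 1).factorial : ℝ) ^ 2) * t ^ (i + 1))) (𝓝[>] (0:ℝ)) (𝓝 1) ∧
    Tendsto (fun t : ℝ => (∑' m : ℕ, Kd (n + m) t) /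
        (((ascPochhammer ℝ (n + 1)).eval (1/2 : ℝ) * (ascPochhammer ℝ (n + 1)).eval (-(1/2) : ℝ) /
          ((n + 1).factorial : ℝ) ^ 2) * t ^ (n + 1))) (𝓝[>] (0:ℝ)) (𝓝 1) := by
  constructor
  · exact ratio_tendsto i (fun t => Kd i t) (3100*((i:ℝ)+1)^2 + 1) (by positivity)
      (fun t ht ht16 => kernel_est i ht ht16 (hK i t ht (by linarith)))
  · apply ratio_tendsto n (fun t => ∑' m : ℕ, Kd (n + m) t)
      (3100*((n:ℝ)+1)^2 + 1 + 20000*4^n) (by positivity)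
    intro t ht ht16
    have h4t0 : (0:ℝ) ≤ 4*t := by linarith
    have h4t1 : 4*t < 1 := by linarith
    have hbb : ∀ m : ℕ, |Kd (n+m) t| ≤ (3200*4^n*t^(n+1)) * (4*t)^m := by
      intro m
      have h := Kd_abs_le hK (n+m) ht ht16
      have heq : 3200*4^(n+m)*t^(n+m+1) = (3200*4^n*t^(n+1))*(4*t)^m := by
        rw [show n+m+1 = (n+1)+m from by omega, pow_add, pow_add, mul_pow]
        ring
      rw [heq] at h
      exact h
    have hgeo : Summable (fun m : ℕ => (3200*4^n*t^(n+1)) * (4*t)^m) :=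
      (summable_geometric_of_lt_one h4t0 h4t1).mul_left _
    have habs_summ : Summable (fun m : ℕ => |Kd (n+m) t|) :=
      Summable.of_nonneg_of_le (fun m => abs_nonneg _) hbb hgeo
    have hsumm : Summable (fun m : ℕ => Kd (n+m) t) := by
      apply Summable.of_norm_bounded hgeo
      intro m
      simpa only [Real.norm_eq_abs] using hbb m
    have hsplit : ∑' m : ℕ, Kd (n+m) t = Kd (n+0) t + ∑' m : ℕ, Kd (n+(m+1)) t :=
      Summable.tsum_eq_zero_add hsumm
    have htail := tail_sum_le (f := fun m : ℕ => |Kd (n+m) t|) habs_summ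
      (fun m => abs_nonneg _) hbb h4t0 h4t1
    have htail_summ : Summable (fun m : ℕ => Kd (n+(m+1)) t) :=
      (summable_nat_add_iff 1).mpr hsumm
    have habs_tail : |∑' m : ℕ, Kd (n+(m+1)) t| ≤ ∑' m : ℕ, |Kd (n+(m+1)) t| := by
      have h := norm_tsum_le_tsum_norm (f := fun m : ℕ => Kd (n+(m+1)) t)
        (by simpa only [Real.norm_eq_abs] using (summable_nat_add_iff 1).mpr habs_summ)
      simpa only [Real.norm_eq_abs] using h
    have hinv : (1-4*t)⁻¹ ≤ 4/3 := by
      rw [inv_le_comm₀ (by linarith) (by norm_num)]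
      linarith
    have htail2 : |∑' m : ℕ, Kd (n+(m+1)) t| ≤ 20000*4^n*t^(n+2) := by
      have hKpos : (0:ℝ) ≤ 3200*4^n*t^(n+1) := by positivity
      have step : (3200*4^n*t^(n+1)) * (4*t) * (1-4*t)⁻¹
          ≤ (3200*4^n*t^(n+1)) * (4*t) * (4/3) := by
        apply mul_le_mul_of_nonneg_left hinv (by positivity)
      have heq : t^(n+2) = t^(n+1) * t := by rw [pow_succ]
      have hfin : (3200*4^n*t^(n+1)) * (4*t) * (4/3) ≤ 20000*4^n*t^(n+2) := by
        rw [heq]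
        have hmono : (0:ℝ) ≤ 4^n * (t^(n+1) * t) := by positivity
        nlinarith [hmono]
      linarith [habs_tail, htail.2, step, hfin]
    have hest := kernel_est n ht ht16 (hK n t ht (by linarith))
    have hsplit' : ∑' m : ℕ, Kd (n+m) t = Kd n t + ∑' m : ℕ, Kd (n+(m+1)) t := hsplit
    have hfinal : |(∑' m : ℕ, Kd (n+m) t) - coefC n * t^(n+1)|
        ≤ (3100*((n:ℝ)+1)^2 + 1 + 20000*4^n) * t^(n+2) := by
      rw [hsplit']
      have hdec : Kd n t + (∑' m : ℕ, Kd (n+(m+1)) t) - coefC n * t^(n+1)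
          = (Kd n t - coefC n * t^(n+1)) + ∑' m : ℕ, Kd (n+(m+1)) t := by ring
      rw [hdec]
      calc |(Kd n t - coefC n * t^(n+1)) + ∑' m : ℕ, Kd (n+(m+1)) t|
          ≤ |Kd n t - coefC n * t^(n+1)| + |∑' m : ℕ, Kd (n+(m+1)) t| := abs_add_le _ _
        _ ≤ (3100*((n:ℝ)+1)^2 + 1) * t^(n+2) + 20000*4^n*t^(n+2) := add_le_add hest htail2
        _ = (3100*((n:ℝ)+1)^2 + 1 + 20000*4^n) * t^(n+2) := by ring
    exact hfinal
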